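/- Let (L_1,…,L_k) be a multinomial random vector with T trials and probability vector (p_1,…,p_k), and let U ⊆ {1,…,n} be a set of products such that min_{1≤i≤k} p_i ≥ max_{i∈U} v_i/(1+v_i). Then E(max_{1≤i≤k} L_i) ≥ OPT^DP(U). -/

import Mathlib

open Finset

/-- MNL choice probability of product `i` when assortment `S` is offered. -/
noncomputable def phi {n : ℕ} (v : Fin n → ℝ) (S : Finset (Fin n)) (i : Fin n) : ℝ :=
  v i / (1 + ∑ j ∈ S, v j)

/-- MNL no-purchase probability when assortment `S` is offered. -/
noncomputable def phi0 {n : ℕ} (v : Fin n → ℝ) (S : Finset (Fin n)) : ℝ :=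
  1 / (1 + ∑ j ∈ S, v j)

/-- The dynamic-programming value functions `M_t(ℓ)` of the adaptive maximum load
problem over the universe `U`: `M_0(ℓ) = max_i ℓ_i` and
`M_t(ℓ) = max_{S ⊆ U} (φ_0(S)·M_{t-1}(ℓ) + ∑_{i∈S} φ_i(S)·M_{t-1}(ℓ + e_i))`. -/
noncomputable def dpVal {n : ℕ} (v : Fin n → ℝ) (U : Finset (Fin n)) :
    ℕ → (Fin n → ℕ) → ℝ
  | 0, ℓ => ((Finset.univ.sup ℓ : ℕ) : ℝ)
  | t + 1, ℓ =>
      U.powerset.sup' ⟨∅, Finset.empty_mem_powerset U⟩ fun S =>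
        phi0 v S * dpVal v U t ℓ +
          ∑ i ∈ S, phi v S i * dpVal v U t (Function.update ℓ i (ℓ i + 1))

/-- `OPT^DP(U) = M_T(0)`: the optimal expected maximum load achievable by an adaptive
policy offering assortments from the universe `U` to `T` sequentially arriving customers
making independent MNL choices. -/
noncomputable def dpOpt {n : ℕ} (v : Fin n → ℝ) (U : Finset (Fin n)) (T : ℕ) : ℝ :=
  dpVal v U T fun _ => 0

/-- `E(max_{1 ≤ i ≤ k} L_i)` where `(L_1, …, L_k)` is a multinomial random vector with `T`
trials and probability vector `p`: each of `T` independent trials results in outcome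
`i : Fin k` with probability `p i`, and `L_i` counts the trials with outcome `i`. -/
noncomputable def multiExpMax (T k : ℕ) (p : Fin k → ℝ) : ℝ :=
  ∑ f : Fin T → Fin k,
    (∏ t, p (f t)) *
      ((Finset.univ.sup fun i => (Finset.univ.filter fun t => f t = i).card : ℕ) : ℝ)


section Aux

variable {d : ℕ}

/-- Sum of the `m` largest entries of `x`. -/
def topSum (m : ℕ) (x : Fin d → ℕ) : ℕ :=
  ((univ.powerset.filter fun A => A.card ≤ m).sup fun A => ∑ i ∈ A, x i)

lemma sum_le_topSum {m : ℕ} {x : Fin d → ℕ} {A : Finset (Fin d)} (hA : A.card ≤ m) :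
    ∑ i ∈ A, x i ≤ topSum m x :=
  Finset.le_sup (f := fun A => ∑ i ∈ A, x i) (by simp [hA])

lemma topSum_le {m : ℕ} {x : Fin d → ℕ} {b : ℕ}
    (h : ∀ A : Finset (Fin d), A.card ≤ m → ∑ i ∈ A, x i ≤ b) : topSum m x ≤ b := by
  apply Finset.sup_le
  intro A hA
  simp only [mem_filter, mem_powerset] at hA
  exact h A hA.2

lemma topSum_exists (m : ℕ) (x : Fin d → ℕ) :
    ∃ A : Finset (Fin d), A.card ≤ m ∧ ∑ i ∈ A, x i = topSum m x := by
  obtain ⟨A, hA, hval⟩ := Finset.exists_mem_eq_sup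
    (univ.powerset.filter fun A => A.card ≤ m) ⟨∅, by simp⟩ (fun A => ∑ i ∈ A, x i)
  simp only [mem_filter, mem_powerset] at hA
  exact ⟨A, hA.2, hval.symm⟩

lemma topSum_mono_m {m m' : ℕ} (h : m ≤ m') (x : Fin d → ℕ) :
    topSum m x ≤ topSum m' x :=
  topSum_le fun A hA => sum_le_topSum (hA.trans h)

lemma topSum_mono_x {m : ℕ} {x y : Fin d → ℕ} (h : ∀ i, x i ≤ y i) :
    topSum m x ≤ topSum m y :=
  topSum_le fun A hA => (Finset.sum_le_sum fun i _ => h i).trans (sum_le_topSum hA)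

lemma topSum_zero (x : Fin d → ℕ) : topSum 0 x = 0 := by
  apply Nat.le_antisymm _ (Nat.zero_le _)
  apply topSum_le
  intro A hA
  rw [Nat.le_zero, Finset.card_eq_zero] at hA
  simp [hA]

lemma topSum_le_total (m : ℕ) (x : Fin d → ℕ) : topSum m x ≤ ∑ i, x i :=
  topSum_le fun A _ => Finset.sum_le_sum_of_subset (Finset.subset_univ A)

lemma topSum_total {m : ℕ} (h : d ≤ m) (x : Fin d → ℕ) : topSum m x = ∑ i, x i :=
  Nat.le_antisymm (topSum_le_total m x)
    (sum_le_topSum (by simpa using h))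

lemma topSum_one (x : Fin d → ℕ) : topSum 1 x = univ.sup x := by
  apply Nat.le_antisymm
  · apply topSum_le
    intro A hA
    interval_cases h : A.card
    · rw [Finset.card_eq_zero] at h; simp [h]
    · rw [Finset.card_eq_one] at h
      obtain ⟨a, rfl⟩ := h
      rw [Finset.sum_singleton]
      exact Finset.le_sup (f := x) (mem_univ a)
  · apply Finset.sup_le
    intro i _
    simpa using sum_le_topSum (A := {i}) (by simp)

/-- exists optimal set of card exactly `min m d`. -/
lemma topSum_exists_card (m : ℕ) (x : Fin d → ℕ) :
    ∃ A : Finset (Fin d), A.card = min m d ∧ ∑ i ∈ A, x i = topSum m x := by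
  obtain ⟨A, hA, hval⟩ := topSum_exists m x
  have hcard : A.card ≤ min m d := le_min hA (by simpa using Finset.card_le_card (Finset.subset_univ A))
  obtain ⟨B, hAB, hBu, hB⟩ := Finset.exists_subsuperset_card_eq (Finset.subset_univ A)
    hcard (by simpa using min_le_right m d)
  refine ⟨B, hB, Nat.le_antisymm (sum_le_topSum (by simp [hB, min_le_left])) ?_⟩
  rw [← hval]
  exact Finset.sum_le_sum_of_subset hAB

/-- members of an optimal set are at least the marginal value. -/
lemma opt_mem_ge {m : ℕ} {x : Fin d → ℕ} {A : Finset (Fin d)} (hA : A.card ≤ m)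
    (hval : topSum m x ≤ ∑ i ∈ A, x i) {i : Fin d} (hi : i ∈ A) :
    topSum m x ≤ x i + topSum (m - 1) x := by
  have h1 : ∑ j ∈ A.erase i, x j ≤ topSum (m - 1) x := by
    apply sum_le_topSum
    rw [Finset.card_erase_of_mem hi]
    omega
  have h2 : ∑ j ∈ A, x j = x i + ∑ j ∈ A.erase i, x j := by
    rw [Finset.add_sum_erase _ _ hi]
  omega

/-- concavity step: `topSum (m+1) + topSum (m-1) ≤ 2 * topSum m`. -/
lemma topSum_concave (m : ℕ) (hm : 1 ≤ m) (x : Fin d → ℕ) :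
    topSum (m + 1) x + topSum (m - 1) x ≤ topSum m x + topSum m x := by
  obtain ⟨A, hA, hAval⟩ := topSum_exists (m + 1) x
  obtain ⟨B, hB, hBval⟩ := topSum_exists (m - 1) x
  by_cases hc : A.card ≤ m
  · have h1 : topSum (m + 1) x ≤ topSum m x := hAval ▸ sum_le_topSum hc
    have h2 : topSum (m - 1) x ≤ topSum m x := topSum_mono_m (by omega) x
    omega
  · -- A.card = m + 1 > B.card, pick x₀ ∈ A \ B
    have hex : ∃ a ∈ A, a ∉ B := by
      by_contra hcon
      push_neg at hcon
      have := Finset.card_le_card hcon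
      omega
    obtain ⟨a, haA, haB⟩ := hex
    have h1 : ∑ i ∈ A.erase a, x i ≤ topSum m x := by
      apply sum_le_topSum; rw [Finset.card_erase_of_mem haA]; omega
    have h2 : ∑ i ∈ insert a B, x i ≤ topSum m x := by
      apply sum_le_topSum; rw [Finset.card_insert_of_notMem haB]; omega
    have h3 : ∑ i ∈ A, x i = x a + ∑ i ∈ A.erase a, x i := by
      rw [Finset.add_sum_erase _ _ haA]
    have h4 : ∑ i ∈ insert a B, x i = x a + ∑ i ∈ B, x i := by
      rw [Finset.sum_insert haB]
    omega

/-- decreasing marginals, general form. -/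
lemma topSum_marginal_anti {x : Fin d → ℕ} {m m' : ℕ} (h1 : 1 ≤ m) (h : m ≤ m') :
    topSum m' x + topSum (m - 1) x ≤ topSum (m' - 1) x + topSum m x := by
  induction m', h using Nat.le_induction with
  | base => omega
  | succ m' hm' ih =>
    have hc := topSum_concave m' (by omega) x
    have : m' + 1 - 1 = m' := by omega
    rw [this]
    have : m' - 1 ≤ m' := by omega
    have hmono := topSum_mono_m this x
    omega

/-- increment coordinate `i` by one. -/
def bump (x : Fin d → ℕ) (i : Fin d) : Fin d → ℕ := Function.update x i (x i + 1)

lemma le_bump (x : Fin d → ℕ) (j i : Fin d) : x i ≤ bump x j i := by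
  unfold bump Function.update
  by_cases h : i = j <;> simp [h]

lemma sum_bump (x : Fin d → ℕ) (j : Fin d) (A : Finset (Fin d)) :
    ∑ i ∈ A, bump x j i = (∑ i ∈ A, x i) + if j ∈ A then 1 else 0 := by
  by_cases h : j ∈ A
  · rw [if_pos h]
    unfold bump
    rw [Finset.sum_update_of_mem h, ← Finset.erase_eq, ← Finset.add_sum_erase _ x h]
    omega
  · rw [if_neg h, Finset.sum_congr rfl, add_zero]
    intro i hi
    unfold bump Function.update
    have : i ≠ j := fun hc => h (hc ▸ hi)
    simp [this]

lemma total_bump (x : Fin d → ℕ) (j : Fin d) :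
    ∑ i, bump x j i = (∑ i, x i) + 1 := by
  rw [sum_bump, if_pos (mem_univ j)]

lemma topSum_bump_le (m : ℕ) (x : Fin d → ℕ) (j : Fin d) :
    topSum m (bump x j) ≤ topSum m x + 1 := by
  apply topSum_le
  intro A hA
  rw [sum_bump]
  have := sum_le_topSum (x := x) hA
  split <;> omega

lemma topSum_le_bump (m : ℕ) (x : Fin d → ℕ) (j : Fin d) :
    topSum m x ≤ topSum m (bump x j) :=
  topSum_mono_x (le_bump x j)

/-- `topSum` of a bump is monotone in the value of the bumped coordinate. -/
lemma topSum_bump_mono {x : Fin d → ℕ} {j j' : Fin d} (h : x j' ≤ x j) (m : ℕ) :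
    topSum m (bump x j') ≤ topSum m (bump x j) := by
  apply topSum_le
  intro A hA
  rw [sum_bump]
  by_cases h1 : j' ∈ A
  · rw [if_pos h1]
    by_cases h2 : j ∈ A
    · have : ∑ i ∈ A, x i + 1 = ∑ i ∈ A, bump x j i := by rw [sum_bump, if_pos h2]
      rw [this]; exact sum_le_topSum hA
    · -- swap j' for j
      set C := insert j (A.erase j') with hC
      have hjC : j ∉ A.erase j' := fun hc => h2 (Finset.mem_of_mem_erase hc)
      have hcard : C.card ≤ m := by
        rw [hC, Finset.card_insert_of_notMem hjC, Finset.card_erase_of_mem h1]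
        have := Finset.card_pos.mpr ⟨j', h1⟩
        omega
      have hsum : ∑ i ∈ C, bump x j i = x j + 1 + ∑ i ∈ A.erase j', x i := by
        rw [hC, sum_bump, Finset.sum_insert hjC, if_pos (Finset.mem_insert_self _ _)]
        omega
      have herase : ∑ i ∈ A, x i = x j' + ∑ i ∈ A.erase j', x i := by
        rw [Finset.add_sum_erase _ x h1]
      calc ∑ i ∈ A, x i + 1 ≤ x j + 1 + ∑ i ∈ A.erase j', x i := by omega
      _ = ∑ i ∈ C, bump x j i := hsum.symm
      _ ≤ topSum m (bump x j) := sum_le_topSum hcard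
  · rw [if_neg h1, add_zero]
    exact (topSum_mono_x (le_bump x j) (m := m)).trans' (sum_le_topSum hA)

/-- domination of top-sums (possibly different dimensions). -/
def Dom {n k : ℕ} (x : Fin n → ℕ) (y : Fin k → ℕ) : Prop :=
  ∀ m, topSum m x ≤ topSum m y

lemma Dom.bump_right {n k : ℕ} {x : Fin n → ℕ} {y : Fin k → ℕ} (h : Dom x y) (i : Fin k) :
    Dom x (bump y i) := fun m => (h m).trans (topSum_le_bump m y i)

/-- Lemma A : bumping a `c`-coordinate that is at least the bumped `ℓ`-coordinate
preserves domination. -/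
lemma Dom.bump_both {n k : ℕ} {x : Fin n → ℕ} {y : Fin k → ℕ} (h : Dom x y)
    {j : Fin n} {i : Fin k} (hij : x j ≤ y i) : Dom (bump x j) (bump y i) := by
  intro m
  apply topSum_le
  intro A hA
  rw [sum_bump]
  by_cases h1 : j ∈ A
  swap
  · rw [if_neg h1, add_zero]
    exact ((h m).trans (topSum_le_bump m y i)).trans' (sum_le_topSum hA)
  rw [if_pos h1]
  have hm : 1 ≤ m := le_trans (Finset.card_pos.mpr ⟨j, h1⟩) hA
  -- bound: ∑_A x ≤ x j + topSum (m-1) x ≤ y i + topSum (m-1) y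
  have hb1 : ∑ i' ∈ A.erase j, x i' ≤ topSum (m - 1) x := by
    apply sum_le_topSum
    rw [Finset.card_erase_of_mem h1]; omega
  have hb2 : ∑ i' ∈ A, x i' = x j + ∑ i' ∈ A.erase j, x i' := by
    rw [Finset.add_sum_erase _ x h1]
  have hbound : ∑ i' ∈ A, x i' ≤ y i + topSum (m - 1) y := by
    have := h (m - 1)
    omega
  obtain ⟨B, hBcard, hBval⟩ := topSum_exists_card m y
  by_cases h2 : i ∈ B
  · -- y's optimal m-set contains i
    have : ∑ i' ∈ B, bump y i i' = topSum m y + 1 := by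
      rw [sum_bump, if_pos h2, hBval]
    have hle : ∑ i' ∈ B, bump y i i' ≤ topSum m (bump y i) :=
      sum_le_topSum (by rw [hBcard]; exact min_le_left _ _)
    have := h m
    have := sum_le_topSum (x := x) hA
    omega
  · have hBm : B.card = m := by
      rcases le_or_gt m k with hmk | hkm
      · rw [hBcard, min_eq_left hmk]
      · exfalso
        apply h2
        have : B = univ := Finset.eq_univ_of_card B (by
          rw [hBcard, Fintype.card_fin]; omega)
        rw [this]; exact mem_univ i
    obtain ⟨B2, hB2card, hB2val⟩ := topSum_exists (m - 1) y
    have hex : ∃ b ∈ B, b ∉ B2 := by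
      by_contra hcon
      push_neg at hcon
      have := Finset.card_le_card hcon
      omega
    obtain ⟨b, hbB, hbB2⟩ := hex
    have h5 : ∑ i' ∈ insert b B2, y i' ≤ topSum m y := by
      apply sum_le_topSum
      rw [Finset.card_insert_of_notMem hbB2]; omega
    rw [Finset.sum_insert hbB2] at h5
    have hiB : i ∉ B.erase b := fun hc => h2 (Finset.mem_of_mem_erase hc)
    have hCcard : (insert i (B.erase b)).card ≤ m := by
      rw [Finset.card_insert_of_notMem hiB, Finset.card_erase_of_mem hbB]
      omega
    have e5 : ∑ i' ∈ B, y i' = y b + ∑ i' ∈ B.erase b, y i' := by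
      rw [Finset.add_sum_erase _ y hbB]
    have e6 : ∑ i' ∈ insert i (B.erase b), bump y i i' =
        y i + (∑ i' ∈ B.erase b, y i') + 1 := by
      rw [sum_bump, if_pos (Finset.mem_insert_self _ _), Finset.sum_insert hiB]
    have e7 : ∑ i' ∈ insert i (B.erase b), bump y i i' ≤ topSum m (bump y i) :=
      sum_le_topSum hCcard
    omega

/-- if coordinate `i` reaches the marginal value, bumping it increases `topSum m`. -/
lemma enter_bump {k m : ℕ} (hm : 1 ≤ m) {y : Fin k → ℕ} {i : Fin k}
    (h : topSum m y ≤ y i + topSum (m - 1) y) :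
    topSum m y + 1 ≤ topSum m (bump y i) := by
  obtain ⟨B, hBcard, hBval⟩ := topSum_exists_card m y
  by_cases h2 : i ∈ B
  · have : ∑ i' ∈ B, bump y i i' = topSum m y + 1 := by
      rw [sum_bump, if_pos h2, hBval]
    exact this ▸ sum_le_topSum (by rw [hBcard]; exact min_le_left _ _)
  · have hBm : B.card = m := by
      rcases le_or_gt m k with hmk | hkm
      · rw [hBcard, min_eq_left hmk]
      · exfalso
        apply h2
        have : B = univ := Finset.eq_univ_of_card B (by
          rw [hBcard, Fintype.card_fin]; omega)
        rw [this]; exact mem_univ i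
    obtain ⟨B2, hB2card, hB2val⟩ := topSum_exists (m - 1) y
    by_cases h3 : i ∈ B2
    · -- pick x ∈ B \ B2, use insert x B2
      have hex : ∃ b ∈ B, b ∉ B2 := by
        by_contra hcon
        push_neg at hcon
        have := Finset.card_le_card hcon
        omega
      obtain ⟨b, hbB, hbB2⟩ := hex
      have hxb : topSum m y ≤ y b + topSum (m - 1) y :=
        opt_mem_ge (hBm ▸ le_refl m) (le_of_eq hBval.symm) hbB
      have hCcard : (insert b B2).card ≤ m := by
        rw [Finset.card_insert_of_notMem hbB2]; omega
      have e6 : ∑ i' ∈ insert b B2, bump y i i' = y b + (∑ i' ∈ B2, y i') + 1 := by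
        rw [sum_bump, if_pos (Finset.mem_insert_of_mem h3), Finset.sum_insert hbB2]
      have e7 : ∑ i' ∈ insert b B2, bump y i i' ≤ topSum m (bump y i) :=
        sum_le_topSum hCcard
      omega
    · have hCcard : (insert i B2).card ≤ m := by
        rw [Finset.card_insert_of_notMem h3]
        omega
      have e6 : ∑ i' ∈ insert i B2, bump y i i' = y i + (∑ i' ∈ B2, y i') + 1 := by
        rw [sum_bump, if_pos (Finset.mem_insert_self _ _), Finset.sum_insert h3]
      have e7 : ∑ i' ∈ insert i B2, bump y i i' ≤ topSum m (bump y i) :=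
        sum_le_topSum hCcard
      omega

/-- Key structural lemma: either every bin-bump preserves domination, or at least
`#{j' : ℓ j' ≥ ℓ j}` bins do. -/
lemma key_lemma {n k : ℕ} {x : Fin n → ℕ} {y : Fin k → ℕ} (hDom : Dom x y) (j : Fin n) :
    ∃ B : Finset (Fin k), (∀ i ∈ B, Dom (bump x j) (bump y i)) ∧
      ((univ.filter fun j' => x j ≤ x j').card ≤ B.card ∨ B = univ) := by
  classical
  by_cases hall : ∀ i, Dom (bump x j) (bump y i)
  · exact ⟨univ, fun i _ => hall i, Or.inr rfl⟩
  refine ⟨univ.filter fun i => Dom (bump x j) (bump y i),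
    fun i hi => (mem_filter.mp hi).2, Or.inl ?_⟩
  have ha : 1 ≤ x j := by
    by_contra h0
    exact hall fun i => hDom.bump_both (by omega)
  push_neg at hall
  obtain ⟨i₁, hi₁⟩ := hall
  simp only [Dom, not_forall, not_le] at hi₁
  obtain ⟨m₁, hm₁⟩ := hi₁
  have htot : ∑ i', x i' ≤ ∑ i', y i' :=
    calc ∑ i', x i' = topSum n x := (topSum_total le_rfl x).symm
    _ ≤ topSum n y := hDom n
    _ ≤ ∑ i', y i' := topSum_le_total n y
  have hbig : ∀ m, k ≤ m → ∀ i, topSum m (bump x j) ≤ topSum m (bump y i) := by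
    intro m hkm i
    have h1 : topSum m (bump x j) ≤ (∑ i', x i') + 1 :=
      (topSum_le_total _ _).trans (le_of_eq (total_bump x j))
    have h2 : topSum m (bump y i) = (∑ i', y i') + 1 := by
      rw [topSum_total hkm, total_bump]
    omega
  have hPm₁ : topSum m₁ y < topSum m₁ (bump x j) :=
    lt_of_le_of_lt (topSum_le_bump m₁ y i₁) hm₁
  have hm₁k : m₁ < k := by
    by_contra hc
    exact absurd (hbig m₁ (by omega) i₁) (not_le.mpr hm₁)
  have hex : ∃ m, topSum m y < topSum m (bump x j) ∧ m < k := ⟨m₁, hPm₁, hm₁k⟩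
  obtain ⟨hP, hm₀k⟩ := Nat.find_spec hex
  set m₀ := Nat.find hex with hm₀def
  have hmin : ∀ m, m < m₀ → ¬(topSum m y < topSum m (bump x j) ∧ m < k) :=
    fun m hm => Nat.find_min hex hm
  have hm₀1 : 1 ≤ m₀ := by
    rcases Nat.eq_zero_or_pos m₀ with h0 | h1
    · exfalso
      rw [h0, topSum_zero, topSum_zero] at hP
      omega
    · exact h1
  have hE1 : topSum m₀ (bump x j) = topSum m₀ x + 1 := by
    have h1 := topSum_bump_le m₀ x j
    have h2 := hDom m₀
    omega
  have hE2 : topSum m₀ y = topSum m₀ x := by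
    have h2 := hDom m₀
    omega
  have hEnterL : topSum m₀ x ≤ x j + topSum (m₀ - 1) x := by
    obtain ⟨A, hAc, hAv⟩ := topSum_exists m₀ (bump x j)
    have hjA : j ∈ A := by
      by_contra hc
      have he : ∑ i' ∈ A, bump x j i' = ∑ i' ∈ A, x i' := by
        rw [sum_bump, if_neg hc, add_zero]
      have := sum_le_topSum (x := x) hAc
      omega
    have h3 : ∑ i' ∈ A, bump x j i' = ∑ i' ∈ A, x i' + 1 := by
      rw [sum_bump, if_pos hjA]
    exact opt_mem_ge hAc (by omega) hjA
  have htdiff : topSum m₀ y ≤ x j + topSum (m₀ - 1) y := by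
    have := hDom (m₀ - 1)
    omega
  have hINB : ∀ i, topSum m₀ y ≤ y i + topSum (m₀ - 1) y → Dom (bump x j) (bump y i) := by
    intro i hi m
    rcases le_or_gt (topSum m (bump x j)) (topSum m y) with hc | hc
    · exact hc.trans (topSum_le_bump m y i)
    rcases le_or_gt k m with hkm | hmk
    · exact hbig m hkm i
    have hm₀m : m₀ ≤ m := by
      by_contra hlt
      exact hmin m (by omega) ⟨hc, hmk⟩
    have hmarg := topSum_marginal_anti (x := y) hm₀1 hm₀m
    have hnum : topSum m y ≤ y i + topSum (m - 1) y := by omega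
    have h4 := enter_bump (by omega) hnum
    have h5 := topSum_bump_le m x j
    have h6 := hDom m
    omega
  have hE₀ : m₀ ≤ (univ.filter fun i => Dom (bump x j) (bump y i)).card := by
    obtain ⟨B₀, hB₀c, hB₀v⟩ := topSum_exists_card m₀ y
    have hBm : B₀.card = m₀ := by rw [hB₀c]; omega
    have hsub : B₀ ⊆ univ.filter fun i => Dom (bump x j) (bump y i) := by
      intro i hi
      simp only [mem_filter, mem_univ, true_and]
      exact hINB i (opt_mem_ge (le_of_eq hBm) (le_of_eq hB₀v.symm) hi)
    calc m₀ = B₀.card := hBm.symm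
    _ ≤ _ := Finset.card_le_card hsub
  set μ := (univ.filter fun j' => x j ≤ x j').card with hμdef
  rcases le_or_gt μ m₀ with hcase | hcase
  · omega
  have hμn : μ ≤ n := by
    have := Finset.card_filter_le (univ : Finset (Fin n)) (fun j' => x j ≤ x j')
    simpa using this
  have hStepA : ∀ r, m₀ + r ≤ μ → topSum m₀ x + r * x j ≤ topSum (m₀ + r) x := by
    intro r
    induction r with
    | zero => simp
    | succ r ih =>
      intro hr
      have h1 := ih (by omega)
      obtain ⟨A, hAc, hAv⟩ := topSum_exists_card (m₀ + r) x
      have hAcard : A.card = m₀ + r := by rw [hAc]; omega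
      have hex2 : ∃ j' ∈ univ.filter (fun j' => x j ≤ x j'), j' ∉ A := by
        by_contra hcon
        push_neg at hcon
        have := Finset.card_le_card hcon
        omega
      obtain ⟨j', hj'f, hj'A⟩ := hex2
      have hj'x : x j ≤ x j' := (mem_filter.mp hj'f).2
      have hc : (insert j' A).card ≤ m₀ + r + 1 := by
        rw [Finset.card_insert_of_notMem hj'A]; omega
      have h2 := sum_le_topSum (A := insert j' A) (x := x) hc
      rw [Finset.sum_insert hj'A] at h2
      rw [show m₀ + (r + 1) = m₀ + r + 1 from rfl, add_one_mul]
      omega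
  have hStepB : ∀ r, m₀ + r ≤ k → topSum (m₀ + r) y ≤ topSum m₀ y + r * x j := by
    intro r
    induction r with
    | zero => simp
    | succ r ih =>
      intro hr
      have h1 := ih (by omega)
      have hmarg := topSum_marginal_anti (x := y) hm₀1 (by omega : m₀ ≤ m₀ + r + 1)
      have he : m₀ + r + 1 - 1 = m₀ + r := by omega
      rw [he] at hmarg
      rw [show m₀ + (r + 1) = m₀ + r + 1 from rfl, add_one_mul]
      omega
  rcases le_or_gt μ k with hμk | hkμ
  swap
  · exfalso
    have h1 := hStepA (μ - m₀) (by omega)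
    have e1 : m₀ + (μ - m₀) = μ := by omega
    rw [e1] at h1
    have h2 := hStepB (k - m₀) (by omega)
    have e2 : m₀ + (k - m₀) = k := by omega
    rw [e2] at h2
    have h3 : topSum μ x ≤ topSum μ y := hDom μ
    have h4 : topSum μ y ≤ topSum k y := by
      have h4a := topSum_le_total μ y
      have h4b := topSum_total (le_refl k) y
      omega
    have h5 : (μ - m₀) * x j ≤ (k - m₀) * x j := by omega
    have h6 : μ - m₀ ≤ k - m₀ := Nat.le_of_mul_le_mul_right h5 (by omega)
    omega
  have hfin : μ ≤ (univ.filter fun i => x j ≤ y i).card := by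
    obtain ⟨A, hAc, hAv⟩ := topSum_exists_card μ y
    have hAcard : A.card = μ := by rw [hAc]; omega
    have hdrop : topSum (μ - 1) y + x j ≤ topSum μ y := by
      have h1 := hStepA (μ - m₀) (by omega)
      have e1 : m₀ + (μ - m₀) = μ := by omega
      rw [e1] at h1
      have h2 := hStepB (μ - 1 - m₀) (by omega)
      have e2 : m₀ + (μ - 1 - m₀) = μ - 1 := by omega
      rw [e2] at h2
      have e3 : μ - m₀ = (μ - 1 - m₀) + 1 := by omega
      rw [e3, add_one_mul] at h1
      have h3 : topSum μ x ≤ topSum μ y := hDom μ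
      omega
    have hsub : A ⊆ univ.filter fun i => x j ≤ y i := by
      intro i hi
      simp only [mem_filter, mem_univ, true_and]
      have := opt_mem_ge (le_of_eq hAcard) (le_of_eq hAv.symm) hi
      omega
    calc μ = A.card := hAcard.symm
    _ ≤ _ := Finset.card_le_card hsub
  have hsub2 : (univ.filter fun i => x j ≤ y i) ⊆
      (univ.filter fun i => Dom (bump x j) (bump y i)) := by
    intro i hi
    simp only [mem_filter, mem_univ, true_and] at hi ⊢
    exact hDom.bump_both hi
  calc μ ≤ _ := hfin
  _ ≤ _ := Finset.card_le_card hsub2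

/-- Abstract nested-transportation bound: if each `M j` is dominated by `F i` for all
`i` in its allowed bin set `B j`, the allowed sets are nested along the list, and the
prefix (Hall) conditions hold, then the weighted combination is bounded by `∑ p i F i`. -/
lemma nested_bound {α : Type*} {k : ℕ} (F : Fin k → ℝ) (M : α → ℝ) (M0 : ℝ)
    (hM0 : 0 ≤ M0) (B : α → Finset (Fin k)) (w : α → ℝ) :
    ∀ (L : List α) (p : Fin k → ℝ),
    (∀ i, 0 ≤ p i) →
    (∀ j ∈ L, 0 ≤ w j) →
    (∀ j ∈ L, ∀ i ∈ B j, M j ≤ F i) →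
    (∀ i, M0 ≤ F i) →
    (∀ (L₁ : List α) (j : α) (L₂ : List α), L = L₁ ++ j :: L₂ → ∀ j' ∈ L₂, B j ⊆ B j') →
    (∀ (L₁ : List α) (j : α) (L₂ : List α), L = L₁ ++ j :: L₂ →
        (L₁.map w).sum + w j ≤ ∑ i ∈ B j, p i) →
    ∀ (w0 : ℝ), 0 ≤ w0 → w0 + (L.map w).sum ≤ ∑ i, p i →
    (L.map fun j => w j * M j).sum + w0 * M0 ≤ ∑ i, p i * F i := by
  intro L
  induction L with
  | nil =>
    intro p hp _ _ hb _ _ w0 hw0 htot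
    simp only [List.map_nil, List.sum_nil, zero_add, add_zero] at *
    calc w0 * M0 ≤ (∑ i, p i) * M0 := mul_le_mul_of_nonneg_right htot hM0
    _ = ∑ i, p i * M0 := by rw [Finset.sum_mul]
    _ ≤ ∑ i, p i * F i := Finset.sum_le_sum fun i _ => mul_le_mul_of_nonneg_left (hb i) (hp i)
  | cons j0 L' ih =>
    intro p hp hw ha hb hc hd w0 hw0 htot
    have hwj0 : 0 ≤ w j0 := hw j0 (by simp)
    have hP0 : 0 ≤ ∑ i ∈ B j0, p i := Finset.sum_nonneg fun i _ => hp i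
    have hwP : w j0 ≤ ∑ i ∈ B j0, p i := by simpa using hd [] j0 L' rfl
    set lam : Fin k → ℝ :=
      fun i => if i ∈ B j0 then w j0 * p i / (∑ i' ∈ B j0, p i') else 0 with hlam
    have hlam_nonneg : ∀ i, 0 ≤ lam i := by
      intro i
      rw [hlam]
      dsimp only
      split
      · exact div_nonneg (mul_nonneg hwj0 (hp i)) hP0
      · exact le_refl 0
    have hlam_zero : ∀ i, i ∉ B j0 → lam i = 0 := by
      intro i hi; rw [hlam]; simp [hi]
    have hlam_le : ∀ i, lam i ≤ p i := by
      intro i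
      rw [hlam]
      dsimp only
      split
      · rcases eq_or_lt_of_le hP0 with hP | hP
        · have hpin : p i = 0 := by
            have := Finset.sum_eq_zero_iff_of_nonneg (fun i' _ => hp i') |>.mp hP.symm
            exact this i (by assumption)
          simp [hpin]
        · rw [div_le_iff₀ hP]
          calc w j0 * p i ≤ (∑ i' ∈ B j0, p i') * p i :=
            mul_le_mul_of_nonneg_right hwP (hp i)
          _ = p i * ∑ i' ∈ B j0, p i' := by ring
      · exact hp i
    have hlam_sum : ∑ i ∈ B j0, lam i = w j0 := by
      rcases eq_or_lt_of_le hP0 with hP | hP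
      · have hw0' : w j0 = 0 := le_antisymm (hwP.trans hP.symm.le) hwj0
        rw [hw0']
        apply Finset.sum_eq_zero
        intro i hi
        rw [hlam]
        simp [hi, hw0']
      · have h1 : ∑ i ∈ B j0, lam i = ∑ i ∈ B j0, w j0 * p i / (∑ i' ∈ B j0, p i') := by
          apply Finset.sum_congr rfl
          intro i hi
          rw [hlam]
          simp [hi]
        rw [h1, ← Finset.sum_div, ← Finset.mul_sum, mul_div_assoc,
          div_self (ne_of_gt hP), mul_one]
    have hlam_univ : ∑ i, lam i = w j0 := by
      rw [← hlam_sum]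
      exact (Finset.sum_subset (Finset.subset_univ _)
        (fun i _ hi => hlam_zero i hi)).symm
    have key1 : w j0 * M j0 ≤ ∑ i ∈ B j0, lam i * F i := by
      have h1 : ∑ i ∈ B j0, lam i * M j0 ≤ ∑ i ∈ B j0, lam i * F i :=
        Finset.sum_le_sum fun i hi =>
          mul_le_mul_of_nonneg_left (ha j0 (by simp) i hi) (hlam_nonneg i)
      rw [← Finset.sum_mul, hlam_sum] at h1
      exact h1
    have hlamF : ∑ i, lam i * F i = ∑ i ∈ B j0, lam i * F i :=
      (Finset.sum_subset (Finset.subset_univ _)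
        (fun i _ hi => by rw [hlam_zero i hi, zero_mul])).symm
    -- recurse with the reduced probabilities
    have hrec := ih (fun i => p i - lam i)
      (fun i => sub_nonneg.mpr (hlam_le i))
      (fun j hj => hw j (by simp [hj]))
      (fun j hj => ha j (by simp [hj]))
      hb
      (fun L₁ j L₂ hL => hc (j0 :: L₁) j L₂ (by rw [hL]; rfl))
      ?_ w0 hw0 ?_
    · have hsplit : ∑ i, (p i - lam i) * F i = ∑ i, p i * F i - ∑ i ∈ B j0, lam i * F i := by
        rw [← hlamF, ← Finset.sum_sub_distrib]
        apply Finset.sum_congr rfl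
        intro i _
        ring
      rw [hsplit] at hrec
      simp only [List.map_cons, List.sum_cons]
      linarith
    · -- Hall condition for the tail
      intro L₁ j L₂ hL
      have hj0sub : B j0 ⊆ B j := hc [] j0 L' rfl j (by rw [hL]; simp)
      have hlamBj : ∑ i ∈ B j, lam i = w j0 := by
        rw [← hlam_sum]
        exact (Finset.sum_subset hj0sub (fun i _ hi => hlam_zero i hi)).symm
      have hdd := hd (j0 :: L₁) j L₂ (by rw [hL]; rfl)
      simp only [List.map_cons, List.sum_cons] at hdd
      have : ∑ i ∈ B j, (p i - lam i) = ∑ i ∈ B j, p i - w j0 := by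
        rw [Finset.sum_sub_distrib, hlamBj]
      rw [this]
      linarith
    · -- total mass
      have : ∑ i, (p i - lam i) = ∑ i, p i - w j0 := by
        rw [Finset.sum_sub_distrib, hlam_univ]
      rw [this]
      simp only [List.map_cons, List.sum_cons] at htot
      linarith


/-- Expected maximum of `c + multinomial counts` over `t` further trials. -/
noncomputable def genF (k : ℕ) (p : Fin k → ℝ) : ℕ → (Fin k → ℕ) → ℝ := fun t c =>
  ∑ f : Fin t → Fin k,
    (∏ r, p (f r)) *
      ((Finset.univ.sup fun i => c i + (Finset.univ.filter fun r => f r = i).card : ℕ) : ℝ)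

lemma genF_zero (k : ℕ) (p : Fin k → ℝ) (c : Fin k → ℕ) :
    genF k p 0 c = ((univ.sup c : ℕ) : ℝ) := by
  rw [genF]
  have hterm : ∀ f : Fin 0 → Fin k, ((∏ r, p (f r)) *
      ((Finset.univ.sup fun i => c i + (Finset.univ.filter fun r => f r = i).card : ℕ) : ℝ))
      = ((univ.sup c : ℕ) : ℝ) := by
    intro f
    have h1 : (∏ r : Fin 0, p (f r)) = 1 := by simp
    have h2 : (Finset.univ.sup fun i => c i + (Finset.univ.filter fun r : Fin 0 => f r = i).card)
        = univ.sup c := by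
      apply congrArg
      funext i
      simp
    rw [h1, h2, one_mul]
  rw [Finset.sum_congr rfl fun f _ => hterm f, Finset.sum_const, Finset.card_univ]
  have hcard : Fintype.card (Fin 0 → Fin k) = 1 := by simp
  rw [hcard, one_smul]

lemma genF_succ (k : ℕ) (p : Fin k → ℝ) (t : ℕ) (c : Fin k → ℕ) :
    genF k p (t + 1) c = ∑ i, p i * genF k p t (bump c i) := by
  rw [genF]
  rw [← Equiv.sum_comp (Fin.consEquiv fun _ : Fin (t + 1) => Fin k)
      (fun f : Fin (t + 1) → Fin k => (∏ r, p (f r)) *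
        ((Finset.univ.sup fun i => c i + (Finset.univ.filter fun r => f r = i).card : ℕ) : ℝ))]
  rw [Fintype.sum_prod_type]
  apply Finset.sum_congr rfl
  intro i _
  rw [genF, Finset.mul_sum]
  apply Finset.sum_congr rfl
  intro g _
  have hce : ((Fin.consEquiv fun _ : Fin (t + 1) => Fin k) (i, g) : Fin (t + 1) → Fin k)
      = Fin.cons i g := rfl
  rw [hce]
  have h1 : (∏ r : Fin (t + 1), p ((Fin.cons i g : Fin (t + 1) → Fin k) r)) = p i * ∏ r : Fin t, p (g r) := by
    rw [Fin.prod_univ_succ]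
    simp
  have h2 : (Finset.univ.sup fun i' => c i' +
        (Finset.univ.filter fun r : Fin (t + 1) => (Fin.cons i g : Fin (t + 1) → Fin k) r = i').card)
      = Finset.univ.sup fun i' => bump c i i' +
        (Finset.univ.filter fun r : Fin t => g r = i').card := by
    apply congrArg
    funext i'
    rw [Finset.card_filter, Finset.card_filter, Fin.sum_univ_succ]
    simp only [Fin.cons_zero, Fin.cons_succ]
    have hb : bump c i i' = if i' = i then c i + 1 else c i' := by
      unfold bump
      exact Function.update_apply c i (c i + 1) i'
    rw [hb]
    by_cases h : i = i'
    · subst h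
      simp
      omega
    · simp [h, Ne.symm h]
  rw [h1, h2]
  ring

lemma dpVal_nonneg {n : ℕ} (v : Fin n → ℝ) (U : Finset (Fin n)) :
    ∀ (t : ℕ) (ℓ : Fin n → ℕ), 0 ≤ dpVal v U t ℓ := by
  intro t
  induction t with
  | zero => intro ℓ; rw [dpVal]; positivity
  | succ t ih =>
    intro ℓ
    rw [dpVal]
    have h0 : phi0 v ∅ * dpVal v U t ℓ +
        ∑ i ∈ (∅ : Finset (Fin n)), phi v ∅ i * dpVal v U t (Function.update ℓ i (ℓ i + 1))
        = dpVal v U t ℓ := by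
      simp [phi0]
    calc (0:ℝ) ≤ dpVal v U t ℓ := ih ℓ
    _ = _ := h0.symm
    _ ≤ _ := Finset.le_sup' (fun S => phi0 v S * dpVal v U t ℓ +
        ∑ i ∈ S, phi v S i * dpVal v U t (Function.update ℓ i (ℓ i + 1)))
      (Finset.empty_mem_powerset U)

lemma main_ind (n k : ℕ) (v : Fin n → ℝ) (hv : ∀ i, 0 < v i) (U : Finset (Fin n))
    (p : Fin k → ℝ) (hp : ∀ i, 0 ≤ p i) (hsum : ∑ i, p i = 1)
    (hdom : ∀ i : Fin k, ∀ j ∈ U, v j / (1 + v j) ≤ p i) (hk : 0 < k) :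
    ∀ (t : ℕ) (ℓ : Fin n → ℕ) (c : Fin k → ℕ), Dom ℓ c → dpVal v U t ℓ ≤ genF k p t c := by
  classical
  haveI : Nonempty (Fin k) := ⟨⟨0, hk⟩⟩
  have hkne : (univ : Finset (Fin k)).Nonempty := univ_nonempty
  intro t
  induction t with
  | zero =>
    intro ℓ c h
    rw [genF_zero, dpVal]
    have h1 := h 1
    rw [topSum_one, topSum_one] at h1
    exact_mod_cast h1
  | succ t ih =>
    intro ℓ c h
    rw [genF_succ, dpVal]
    apply Finset.sup'_le
    intro S hS
    rw [Finset.mem_powerset] at hS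
    set vS := ∑ j ∈ S, v j with hvS
    have hvS0 : 0 ≤ vS := Finset.sum_nonneg fun j _ => (hv j).le
    have h1vS : (0:ℝ) < 1 + vS := by linarith
    -- the sorting relation: decreasing loads, ties broken by index
    set rel : Fin n → Fin n → Prop := fun a b => ℓ b < ℓ a ∨ (ℓ a = ℓ b ∧ a ≤ b) with hrel
    haveI : DecidableRel rel := fun a b => by rw [hrel]; infer_instance
    haveI : IsTrans (Fin n) rel := by
      constructor
      intro a b cc hab hbc
      rw [hrel] at *
      rcases hab with h1 | ⟨h1, h1'⟩ <;> rcases hbc with h2 | ⟨h2, h2'⟩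
      · left; omega
      · left; omega
      · left; omega
      · right; exact ⟨h1.trans h2, le_trans h1' h2'⟩
    haveI : IsAntisymm (Fin n) rel := by
      constructor
      intro a b hab hba
      rw [hrel] at *
      rcases hab with h1 | ⟨h1, h1'⟩ <;> rcases hba with h2 | ⟨h2, h2'⟩
      · omega
      · omega
      · omega
      · exact le_antisymm h1' h2'
    haveI : IsTotal (Fin n) rel := by
      constructor
      intro a b
      rw [hrel]
      rcases lt_trichotomy (ℓ a) (ℓ b) with h1 | h1 | h1
      · right; left; exact h1
      · rcases le_total a b with h2 | h2
        · left; right; exact ⟨h1, h2⟩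
        · right; right; exact ⟨h1.symm, h2⟩
      · left; left; exact h1
    set L := S.sort rel with hLdef
    have hLsorted : L.Pairwise rel := Finset.pairwise_sort S rel
    have hLnodup : L.Nodup := Finset.sort_nodup S rel
    have hLmem : ∀ a, a ∈ L ↔ a ∈ S := fun a => Finset.mem_sort rel
    have hconv : ∀ (f : Fin n → ℝ), (L.map f).sum = ∑ j ∈ S, f j := by
      intro f
      rw [← Finset.sum_map_toList]
      exact List.Perm.sum_eq (List.Perm.map f (Finset.sort_perm_toList S rel))
    -- weights and allowed-bin sets
    set w : Fin n → ℝ := fun j => v j / (1 + vS) with hw_def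
    set Bf : Fin n → Finset (Fin k) :=
      fun j => univ.filter fun i => Dom (bump ℓ j) (bump c i) with hBf
    have hw_nonneg : ∀ j, 0 ≤ w j := fun j => div_nonneg (hv j).le h1vS.le
    set q : ℝ := univ.inf' hkne p with hq
    have hq_le : ∀ i, q ≤ p i := fun i => Finset.inf'_le p (mem_univ i)
    have hq0 : 0 ≤ q := Finset.le_inf' hkne p fun i _ => hp i
    have hqle : ∀ j' ∈ S, w j' ≤ q := by
      intro j' hj'
      rw [hq]
      apply Finset.le_inf'
      intro i _
      have hvj : v j' ≤ vS := Finset.single_le_sum (fun i _ => (hv i).le) hj'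
      calc w j' = v j' / (1 + vS) := rfl
      _ ≤ v j' / (1 + v j') := by
        apply div_le_div_of_nonneg_left (hv j').le (by linarith [hv j']) (by linarith)
      _ ≤ p i := hdom i j' (hS hj')
    have hLsum : (L.map w).sum = vS / (1 + vS) := by
      rw [hconv w, hvS, ← Finset.sum_div]
    have hLsum_le_one : (L.map w).sum ≤ 1 := by
      rw [hLsum]
      rw [div_le_one h1vS]
      linarith
    -- apply the nested transportation bound
    have hmain := nested_bound (fun i => genF k p t (bump c i))
      (fun j => dpVal v U t (bump ℓ j)) (dpVal v U t ℓ) (dpVal_nonneg v U t ℓ)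
      Bf w L p hp (fun j _ => hw_nonneg j)
      ?_ ?_ ?_ ?_ (1 / (1 + vS)) (by positivity) ?_
    · -- convert conclusion to the goal
      have harm1 : ∑ i ∈ S, phi v S i * dpVal v U t (Function.update ℓ i (ℓ i + 1))
          = (L.map fun j => w j * dpVal v U t (bump ℓ j)).sum := by
        rw [hconv]
        apply Finset.sum_congr rfl
        intro j _
        simp only [phi, bump, hw_def, hvS]
      have harm0 : phi0 v S = 1 / (1 + vS) := rfl
      rw [harm0, harm1]
      linarith
    · -- domination hypothesis (a)
      intro j _ i hi
      rw [hBf] at hi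
      simp only [mem_filter, mem_univ, true_and] at hi
      exact ih (bump ℓ j) (bump c i) hi
    · -- M0 bound (b)
      intro i
      exact ih ℓ (bump c i) (h.bump_right i)
    · -- nestedness (c)
      intro L₁ j L₂ hLd j' hj'
      have hrelj : rel j j' := by
        have hso := hLsorted
        rw [hLd] at hso
        have hp2 := (List.pairwise_append.mp hso).2.1
        exact (List.pairwise_cons.mp hp2).1 j' hj'
      have hle : ℓ j' ≤ ℓ j := by
        rw [hrel] at hrelj
        rcases hrelj with h1 | ⟨h1, _⟩
        · omega
        · omega
      intro i hi
      rw [hBf] at hi ⊢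
      simp only [mem_filter, mem_univ, true_and] at hi ⊢
      intro m
      exact (topSum_bump_mono hle m).trans (hi m)
    · -- Hall condition (d)
      intro L₁ j L₂ hLd
      have hjL : j ∈ L := by rw [hLd]; simp
      have hjS : j ∈ S := (hLmem j).mp hjL
      obtain ⟨B₀, hB₀dom, hB₀card⟩ := key_lemma h j
      have hB₀sub : B₀ ⊆ Bf j := by
        intro i hi
        rw [hBf]
        simp only [mem_filter, mem_univ, true_and]
        exact hB₀dom i hi
      rcases hB₀card with hcard | huniv
      · -- cardinality branch
        have hall1 : ∀ x ∈ (L₁ ++ [j]).map w, x ≤ q := by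
          intro x hx
          rw [List.mem_map] at hx
          obtain ⟨j'', hj'', rfl⟩ := hx
          apply hqle
          apply (hLmem j'').mp
          rw [hLd]
          rcases List.mem_append.mp hj'' with h1 | h1
          · exact List.mem_append.mpr (Or.inl h1)
          · rw [List.mem_singleton] at h1
            subst h1
            simp
        have hsum1 : ((L₁ ++ [j]).map w).sum ≤ ((L₁ ++ [j]).map w).length • q :=
          List.sum_le_card_nsmul _ q hall1
        rw [List.length_map] at hsum1
        have hsub1 : List.Sublist (L₁ ++ [j]) L := by
          rw [hLd]
          have : L₁ ++ j :: L₂ = (L₁ ++ [j]) ++ L₂ := by simp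
          rw [this]
          exact List.sublist_append_left _ _
        have hnd1 : (L₁ ++ [j]).Nodup := hLnodup.sublist hsub1
        have hmemμ : (L₁ ++ [j]).toFinset ⊆ univ.filter fun j' => ℓ j ≤ ℓ j' := by
          intro a ha
          rw [List.mem_toFinset] at ha
          simp only [mem_filter, mem_univ, true_and]
          rcases List.mem_append.mp ha with h1 | h1
          · have hrelaj : rel a j := by
              have hso := hLsorted
              rw [hLd] at hso
              exact (List.pairwise_append.mp hso).2.2 a h1 j (by simp)
            rw [hrel] at hrelaj
            rcases hrelaj with h2 | ⟨h2, _⟩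
            · omega
            · omega
          · rw [List.mem_singleton] at h1
            subst h1
            exact le_refl _
        have hlen : (L₁ ++ [j]).length ≤ B₀.card := by
          have h1 : (L₁ ++ [j]).toFinset.card = (L₁ ++ [j]).length :=
            List.toFinset_card_of_nodup hnd1
          have h2 := Finset.card_le_card hmemμ
          omega
        have hcount : ((L₁ ++ [j]).length : ℕ) • q ≤ (Bf j).card • q := by
          have hle2 : (L₁ ++ [j]).length ≤ (Bf j).card :=
            hlen.trans (Finset.card_le_card hB₀sub)
          rw [nsmul_eq_mul, nsmul_eq_mul]
          exact mul_le_mul_of_nonneg_right (by exact_mod_cast Nat.cast_le.mpr hle2) hq0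
        have hfinal : (Bf j).card • q ≤ ∑ i ∈ Bf j, p i :=
          Finset.card_nsmul_le_sum (Bf j) p q fun i _ => hq_le i
        have hsplit : ((L₁ ++ [j]).map w).sum = (L₁.map w).sum + w j := by
          simp
        rw [hsplit] at hsum1
        linarith
      · -- full-universe branch
        have hBfuniv : Bf j = univ := by
          apply Finset.Subset.antisymm (Finset.subset_univ _)
          rw [← huniv]
          exact hB₀sub
        rw [hBfuniv]
        have : ∑ i ∈ (univ : Finset (Fin k)), p i = 1 := hsum
        rw [this]
        have hdecomp : (L.map w).sum = (L₁.map w).sum + (w j + (L₂.map w).sum) := by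
          rw [hLd]
          simp
        have hL₂ : 0 ≤ (L₂.map w).sum := by
          apply List.sum_nonneg
          intro x hx
          rw [List.mem_map] at hx
          obtain ⟨j'', _, rfl⟩ := hx
          exact hw_nonneg j''
        linarith
    · -- total mass
      have : 1 / (1 + vS) + (L.map w).sum = 1 := by
        rw [hLsum]
        field_simp
      rw [this, hsum]

lemma topSum_zero_fun {d m : ℕ} : topSum m (fun _ : Fin d => 0) = 0 :=
  Nat.le_antisymm (topSum_le fun A _ => by simp) (Nat.zero_le _)

lemma genF_multiExpMax (T k : ℕ) (p : Fin k → ℝ) :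
    genF k p T (fun _ => 0) = multiExpMax T k p := by
  rw [genF, multiExpMax]
  apply Finset.sum_congr rfl
  intro f _
  norm_num

end Aux

/-- If every single-trial probability `p i` of a multinomial vector dominates the MNL
choice probability `v j / (1 + v j)` of every product `j` of the universe `U`, then the
expected maximum component of the multinomial vector dominates `OPT^DP(U)`. -/
theorem multinomial_max_dominates_dp
    (n T k : ℕ) (v : Fin n → ℝ) (hv : ∀ i, 0 < v i) (U : Finset (Fin n))
    (p : Fin k → ℝ) (hp : ∀ i, 0 ≤ p i) (hsum : ∑ i, p i = 1)
    (hdom : ∀ i : Fin k, ∀ j ∈ U, v j / (1 + v j) ≤ p i) :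
    multiExpMax T k p ≥ dpOpt v U T := by
  rcases Nat.eq_zero_or_pos k with hk0 | hk
  · exfalso
    subst hk0
    simp at hsum
  have hzero : Dom (fun _ : Fin n => 0) (fun _ : Fin k => 0) := by
    intro m
    rw [topSum_zero_fun, topSum_zero_fun]
  have hmain := main_ind n k v hv U p hp hsum hdom hk T (fun _ => 0) (fun _ => 0) hzero
  rw [genF_multiExpMax] at hmain
  exact hmain
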